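/- Dual-update one-step inequality with regularization: let β, τ > 0, γ₀, γ_t ∈ ℝ₊^m, h ∈ ℝ^m, and let γ_{t+1} be the maximizer over ℝ₊^m of γ ↦ ⟨h, γ⟩ − (β/2)‖γ_t − γ‖² − (τ/2)‖γ₀ − γ‖². Then for all γ ∈ ℝ₊^m: −⟨h, γ_{t+1} − γ⟩ ≤ (β/2)‖γ_t − γ‖² − (β/2)‖γ_t − γ_{t+1}‖² − ((β+τ)/2)‖γ_{t+1} − γ‖² − (τ/2)‖γ_{t+1} − γ₀‖² + (τ/2)‖γ − γ₀‖². -/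
import Mathlib


open RealInnerProductSpace

theorem dual_update_one_step {m : ℕ} (β τ : ℝ) (hβ : 0 < β) (hτ : 0 < τ)
    (γ₀ γt h γnext : EuclideanSpace ℝ (Fin m))
    (hγ₀ : ∀ i, 0 ≤ γ₀ i) (hγt : ∀ i, 0 ≤ γt i)
    (hmem : ∀ i, 0 ≤ γnext i)
    (hmax : ∀ γ : EuclideanSpace ℝ (Fin m), (∀ i, 0 ≤ γ i) →
      ⟪h, γ⟫ - β / 2 * ‖γt - γ‖ ^ 2 - τ / 2 * ‖γ₀ - γ‖ ^ 2 ≤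
        ⟪h, γnext⟫ - β / 2 * ‖γt - γnext‖ ^ 2 - τ / 2 * ‖γ₀ - γnext‖ ^ 2) :
    ∀ γ : EuclideanSpace ℝ (Fin m), (∀ i, 0 ≤ γ i) →
      -⟪h, γnext - γ⟫ ≤
        β / 2 * ‖γt - γ‖ ^ 2 - β / 2 * ‖γt - γnext‖ ^ 2
          - (β + τ) / 2 * ‖γnext - γ‖ ^ 2 - τ / 2 * ‖γnext - γ₀‖ ^ 2
          + τ / 2 * ‖γ - γ₀‖ ^ 2 := by
  intro γ hγ
  set d : EuclideanSpace ℝ (Fin m) := γ - γnext with hd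
  have expand : ∀ (x : EuclideanSpace ℝ (Fin m)) (s : ℝ),
      ‖x - (γnext + s • d)‖ ^ 2
        = ‖x - γnext‖ ^ 2 - 2 * s * ⟪x - γnext, d⟫ + s ^ 2 * ‖d‖ ^ 2 := by
    intro x s
    have hxe : x - (γnext + s • d) = (x - γnext) - s • d := by abel
    rw [hxe, norm_sub_sq_real, real_inner_smul_right, norm_smul]
    simp [mul_pow, sq_abs]
    ring
  set c : ℝ := ⟪h, d⟫ - β * ⟪γnext - γt, d⟫ - τ * ⟪γnext - γ₀, d⟫ with hc
  set K : ℝ := (β + τ) / 2 * ‖d‖ ^ 2 with hK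
  have hK0 : 0 ≤ K := by positivity
  have key : ∀ s : ℝ, 0 < s → s ≤ 1 → c * s ≤ K * s ^ 2 := by
    intro s hs hs1
    have hnn : ∀ i, 0 ≤ (γnext + s • d) i := by
      intro i
      have h1 : (γnext + s • d) i = γnext i + s * (γ i - γnext i) := by
        simp [hd]
      rw [h1]
      nlinarith [hmem i, hγ i]
    have hm := hmax _ hnn
    have e1 := expand γt s
    have e2 := expand γ₀ s
    have e3 : ⟪h, γnext + s • d⟫ = ⟪h, γnext⟫ + s * ⟪h, d⟫ := by
      rw [inner_add_right, real_inner_smul_right]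
    have i1 : ⟪γt - γnext, d⟫ = -⟪γnext - γt, d⟫ := by
      rw [← inner_neg_left]; congr 1; abel
    have i2 : ⟪γ₀ - γnext, d⟫ = -⟪γnext - γ₀, d⟫ := by
      rw [← inner_neg_left]; congr 1; abel
    rw [e3, e1, e2, i1, i2] at hm
    simp only [hc, hK]
    nlinarith [hm]
  have hc0 : c ≤ 0 := by
    by_contra hcp
    push_neg at hcp
    set s : ℝ := min 1 (c / (2 * K + 2)) with hs
    have hKp : 0 < 2 * K + 2 := by linarith
    have hsp : 0 < s := lt_min one_pos (div_pos hcp hKp)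
    have hs1 : s ≤ 1 := min_le_left _ _
    have h1 := key s hsp hs1
    have h2 : s ≤ c / (2 * K + 2) := min_le_right _ _
    have h3 : s * (2 * K + 2) ≤ c := by
      rw [div_eq_mul_inv] at h2
      calc s * (2 * K + 2) ≤ c * (2 * K + 2)⁻¹ * (2 * K + 2) := by nlinarith
        _ = c := by field_simp
    nlinarith [sq_nonneg s]
  -- final algebra
  have e1 : ‖γt - γ‖ ^ 2 = ‖γt - γnext‖ ^ 2 + 2 * ⟪γnext - γt, d⟫ + ‖d‖ ^ 2 := by
    have hx : γt - γ = (γt - γnext) - d := by rw [hd]; abel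
    rw [hx, norm_sub_sq_real]
    have : ⟪γt - γnext, d⟫ = -⟪γnext - γt, d⟫ := by
      rw [← inner_neg_left]; congr 1; abel
    rw [this]; ring
  have e2 : ‖γ - γ₀‖ ^ 2 = ‖γnext - γ₀‖ ^ 2 + 2 * ⟪γnext - γ₀, d⟫ + ‖d‖ ^ 2 := by
    have hx : γ - γ₀ = (γnext - γ₀) + d := by rw [hd]; abel
    rw [hx, norm_add_sq_real]
  have e3 : ‖γnext - γ‖ ^ 2 = ‖d‖ ^ 2 := by
    simp only [hd]
    rw [← neg_sub γ γnext, norm_neg]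
  have e4 : -⟪h, γnext - γ⟫ = ⟪h, d⟫ := by
    simp only [hd]
    rw [← neg_sub γnext γ, inner_neg_right]
  rw [e1, e2, e3, e4]
  simp only [hc] at hc0
  linarith
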